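/- Let n ≥ 1 be an integer, δ > 0, ε ∈ [0,1), and M > 1. Then there exists a linear map L from 2^n×2^n complex matrices to 2×2 complex matrices satisfying T(L(|1⟩⟨1|^{⊗n}), |1⟩⟨1|) ≤ ε and L(π_{M′}^{⊗n}) = π_M for every M′ ∈ [2, 2+δ], if and only if ε ≥ 1 − 1/M. -/

import Mathlib

open Matrix ComplexOrder

/-- The positive semidefinite square root of a positive semidefinite matrix
(the definition removed from Mathlib, restored with its old meaning). -/
noncomputable def Matrix.PosSemidef.sqrt {n : Type*} [Fintype n] [DecidableEq n]
    {A : Matrix n n ℂ} (hA : A.PosSemidef) : Matrix n n ℂ :=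
  hA.1.eigenvectorUnitary.1 * diagonal ((↑) ∘ (√·) ∘ hA.1.eigenvalues) *
    (star hA.1.eigenvectorUnitary : Matrix n n ℂ)

/-- Trace norm of a complex matrix: the trace of `sqrt(AᴴA)` (sum of singular values). -/
noncomputable def traceNorm {n : Type*} [Fintype n] [DecidableEq n]
    (A : Matrix n n ℂ) : ℝ :=
  ((Matrix.posSemidef_conjTranspose_mul_self A).sqrt.trace).re

/-- Trace distance `T(X,Y) = ‖X - Y‖₁ / 2`. -/
noncomputable def traceDist {n : Type*} [Fintype n] [DecidableEq n]
    (X Y : Matrix n n ℂ) : ℝ :=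
  traceNorm (X - Y) / 2

/-- A density matrix: positive semidefinite with unit trace. -/
def IsDensityMatrix {n : Type*} [Fintype n] (ρ : Matrix n n ℂ) : Prop :=
  ρ.PosSemidef ∧ ρ.trace = 1

/-- The battery Gibbs state `π_M = diag(1 - 1/M, 1/M)`. -/
noncomputable def piM (M : ℝ) : Matrix (Fin 2) (Fin 2) ℂ :=
  Matrix.diagonal ![((1 - 1/M : ℝ) : ℂ), ((1/M : ℝ) : ℂ)]

/-- The excited battery state `|1⟩⟨1| = diag(0,1)`. -/
def ket1 : Matrix (Fin 2) (Fin 2) ℂ :=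
  Matrix.diagonal ![0, 1]

/-- A test (POVM effect): `0 ≤ E ≤ I`. -/
def IsTest {n : Type*} [Fintype n] [DecidableEq n] (E : Matrix n n ℂ) : Prop :=
  E.PosSemidef ∧ (1 - E).PosSemidef

/-- Choi matrix `Σ_{ij} E_{ij} ⊗ F(E_{ij})` of a linear map on matrices. -/
noncomputable def choiMatrix {n m : Type*} [Fintype n] [DecidableEq n] [Fintype m]
    (F : Matrix n n ℂ →ₗ[ℂ] Matrix m m ℂ) :
    Matrix (n × m) (n × m) ℂ :=
  fun p q => F (Matrix.single p.1 q.1 1) p.2 q.2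

/-- Completely positive (positive semidefinite Choi matrix) and trace preserving. -/
def IsCPTP {n m : Type*} [Fintype n] [DecidableEq n] [Fintype m]
    (F : Matrix n n ℂ →ₗ[ℂ] Matrix m m ℂ) : Prop :=
  (choiMatrix F).PosSemidef ∧ ∀ X, (F X).trace = X.trace

/-- `n`-fold Kronecker (tensor) power of a `2 × 2` matrix, indexed by bit strings. -/
def tensPow (A : Matrix (Fin 2) (Fin 2) ℂ) (n : ℕ) :
    Matrix (Fin n → Fin 2) (Fin n → Fin 2) ℂ :=
  fun x y => ∏ i, A (x i) (y i)

/-- `ε`-ball (in trace distance) of density matrices around a set `𝓟`. -/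
noncomputable def metBall {n : Type*} [Fintype n] [DecidableEq n]
    (ε : ℝ) (P : Set (Matrix n n ℂ)) : Set (Matrix n n ℂ) :=
  {ω | IsDensityMatrix ω ∧ ∃ ρ ∈ P, traceDist ω ρ ≤ ε}


section AuxStmt19

private lemma tensPow_diagonal (d : Fin 2 -> ℂ) (n : ℕ) :
    tensPow (Matrix.diagonal d) n = Matrix.diagonal (fun x => ∏ i, d (x i)) := by
  ext x y
  by_cases h : x = y
  · subst h; simp [tensPow, Matrix.diagonal_apply_eq]
  · rw [Matrix.diagonal_apply_ne _ h]
    obtain ⟨i, hi⟩ := Function.ne_iff.mp h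
    exact Finset.prod_eq_zero (Finset.mem_univ i) (Matrix.diagonal_apply_ne _ hi)

private lemma diagonal_eq_sum_std {m : Type*} [Fintype m] [DecidableEq m] (d : m -> ℂ) :
    Matrix.diagonal d = ∑ x, d x • Matrix.single x x (1:ℂ) := by
  ext i j
  by_cases h : i = j
  · subst h
    simp [Matrix.sum_apply, Matrix.single, Matrix.smul_apply]
  · rw [Matrix.diagonal_apply_ne _ h]
    symm
    simp only [Matrix.sum_apply, Matrix.smul_apply, Matrix.single, Matrix.of_apply,
      smul_eq_mul, mul_ite, mul_one, mul_zero]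
    refine Finset.sum_eq_zero fun x _ => ?_
    simp only [ite_eq_right_iff, and_imp]
    rintro rfl rfl; exact absurd rfl h

private lemma trace_tensPow (A : Matrix (Fin 2) (Fin 2) ℂ) (n : ℕ) :
    (tensPow A n).trace = A.trace ^ n := by
  rw [Matrix.trace, Matrix.trace]
  simp only [Matrix.diag]
  rw [Fintype.sum_pow]
  rfl

private lemma sqrt_scalar_aux (B : Matrix (Fin 2) (Fin 2) ℂ) (hA : B.PosSemidef) (a : ℝ)
    (ha : 0 ≤ a) (hB : B = ((a:ℂ)^2) • (1 : Matrix (Fin 2) (Fin 2) ℂ)) :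
    hA.sqrt = Matrix.diagonal ![(a:ℂ), (a:ℂ)] := by
  show hA.1.eigenvectorUnitary.1 * diagonal ((↑) ∘ (√·) ∘ hA.1.eigenvalues) *
    (star hA.1.eigenvectorUnitary : Matrix (Fin 2) (Fin 2) ℂ) = _
  have hdiag := hA.1.conjStarAlgAut_star_eigenvectorUnitary
  rw [Unitary.conjStarAlgAut_star_apply] at hdiag
  have heig : ∀ i, hA.1.eigenvalues i = a ^ 2 := by
    intro i
    have key : ∀ U : unitaryGroup (Fin 2) ℂ, star (U : Matrix (Fin 2) (Fin 2) ℂ) * B * U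
        = ((a:ℂ)^2) • (1 : Matrix (Fin 2) (Fin 2) ℂ) := by
      intro U
      rw [hB, Matrix.mul_smul, Matrix.smul_mul, Matrix.mul_one, Unitary.coe_star_mul_self]
    rw [key] at hdiag
    have h1 := congrFun (congrFun hdiag i) i
    simp at h1
    exact_mod_cast h1.symm
  have hd : diagonal (((↑) : ℝ → ℂ) ∘ (√·) ∘ hA.1.eigenvalues)
      = (a:ℂ) • (1 : Matrix (Fin 2) (Fin 2) ℂ) := by
    ext i j
    simp [Matrix.diagonal, heig, Real.sqrt_sq ha, Matrix.one_apply]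
  rw [hd, Matrix.mul_smul, Matrix.mul_one, Matrix.smul_mul,
    Unitary.mul_star_self_of_mem hA.1.eigenvectorUnitary.2]
  ext i j
  fin_cases i <;> fin_cases j <;> simp [Matrix.diagonal]

private lemma traceDist_piM_ket1 {M : ℝ} (hM : 1 < M) : traceDist (piM M) ket1 = 1 - 1/M := by
  have hM0 : (0:ℝ) < M := by linarith
  have ha : (0:ℝ) ≤ 1 - 1/M := by
    have : 1/M < 1 := by rw [div_lt_one hM0]; linarith
    linarith
  set a : ℝ := 1 - 1/M with hadef
  have hA : piM M - ket1 = Matrix.diagonal ![(a:ℂ), (-a:ℂ)] := by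
    ext i j
    fin_cases i <;> fin_cases j <;>
      simp [piM, ket1, hadef, Matrix.diagonal] <;> push_cast <;> ring
  have hBps : (Matrix.diagonal ![(a:ℂ), (a:ℂ)]).PosSemidef := by
    refine Matrix.posSemidef_diagonal_iff.mpr fun i => ?_
    fin_cases i <;> simpa using Complex.zero_le_real.mpr ha
  have hsq : (Matrix.diagonal ![(a:ℂ), (a:ℂ)]) ^ 2
      = (piM M - ket1)ᴴ * (piM M - ket1) := by
    rw [hA, Matrix.diagonal_conjTranspose, pow_two, Matrix.diagonal_mul_diagonal,
      Matrix.diagonal_mul_diagonal]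
    ext i j
    fin_cases i <;> fin_cases j <;>
      simp [Matrix.diagonal] <;> push_cast <;> ring
  have hsqrt : (Matrix.posSemidef_conjTranspose_mul_self (piM M - ket1)).sqrt
      = Matrix.diagonal ![(a:ℂ), (a:ℂ)] :=
    sqrt_scalar_aux _ _ a ha (by
      rw [← hsq, pow_two, Matrix.diagonal_mul_diagonal]; ext i j
      fin_cases i <;> fin_cases j <;> simp [Matrix.diagonal, pow_two])
  rw [traceDist, traceNorm, hsqrt, Matrix.trace_diagonal]
  rw [Fin.sum_univ_two]
  simp [hadef]

end AuxStmt19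

/-- clean-battery work extraction from `n` copies of the
uncertain excited battery is trivial: achievable iff `ε ≥ 1 - 1/M`. -/
theorem stmt_19 (n : ℕ) (hn : 1 ≤ n) (δ ε M : ℝ) (hδ : 0 < δ)
    (hε : ε ∈ Set.Ico (0:ℝ) 1) (hM : 1 < M) :
    (∃ L : Matrix (Fin n → Fin 2) (Fin n → Fin 2) ℂ →ₗ[ℂ]
        Matrix (Fin 2) (Fin 2) ℂ,
      traceDist (L (tensPow ket1 n)) ket1 ≤ ε ∧
      ∀ M' ∈ Set.Icc (2:ℝ) (2 + δ), L (tensPow (piM M') n) = piM M) ↔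
      ε ≥ 1 - 1/M := by
  obtain ⟨hε0, hε1⟩ := hε
  constructor
  · rintro ⟨L, hLd, hLE⟩
    set c : (Fin n → Fin 2) → Matrix (Fin 2) (Fin 2) ℂ :=
      fun x => L (Matrix.single x x 1) with hc
    set P : (Fin n → Fin 2) → Polynomial ℂ :=
      fun x => ∏ i, (if x i = 1 then Polynomial.X else 1 - Polynomial.X) with hP
    have hprod : ∀ (t : ℂ) (x : Fin n → Fin 2),
        (∏ i, (![1 - t, t] : Fin 2 → ℂ) (x i)) = (P x).eval t := by
      intro t x
      rw [hP]
      simp only [Polynomial.eval_prod]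
      refine Finset.prod_congr rfl fun i _ => ?_
      have h2 : x i = 0 ∨ x i = 1 := by omega
      rcases h2 with h | h <;> simp [h]
    have hL : ∀ t : ℂ, L (tensPow (Matrix.diagonal ![1 - t, t]) n)
        = ∑ x, (P x).eval t • c x := by
      intro t
      rw [tensPow_diagonal, diagonal_eq_sum_std, map_sum]
      refine Finset.sum_congr rfl fun x _ => ?_
      rw [LinearMap.map_smul, hprod t x]
    have hvec : (![1 - (1:ℂ), 1] : Fin 2 → ℂ) = ![0, 1] := by
      funext k; fin_cases k <;> norm_num
    have hket : tensPow ket1 n = tensPow (Matrix.diagonal ![1 - (1:ℂ), 1]) n := by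
      rw [hvec]; rfl
    have hval : ∀ M' ∈ Set.Icc (2:ℝ) (2 + δ),
        (∑ x, (P x).eval ((1/M' : ℝ) : ℂ) • c x) = piM M := by
      intro M' hM'
      have hd : Matrix.diagonal ![1 - ((1/M' : ℝ):ℂ), ((1/M' : ℝ):ℂ)] = piM M' := by
        ext i j
        fin_cases i <;> fin_cases j <;>
          simp [piM, Matrix.diagonal] <;> push_cast <;> ring
      rw [← hL, hd]
      exact hLE M' hM'
    have hQ : ∀ i j : Fin 2,
        ((∑ x, P x * Polynomial.C (c x i j)) - Polynomial.C (piM M i j)) = 0 := by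
      intro i j
      apply Polynomial.eq_zero_of_infinite_isRoot
      have hinj : Set.InjOn (fun M' : ℝ => ((1/M' : ℝ) : ℂ)) (Set.Icc 2 (2+δ)) := by
        intro a ha b hb hab
        have hab' : ((1/a : ℝ) : ℂ) = ((1/b : ℝ) : ℂ) := hab
        have h1 : (1/a : ℝ) = 1/b := by exact_mod_cast hab'
        have ha0 : (0:ℝ) < a := lt_of_lt_of_le (by norm_num) ha.1
        have hb0 : (0:ℝ) < b := lt_of_lt_of_le (by norm_num) hb.1
        field_simp at h1
        linarith
      have hinf : ((fun M' : ℝ => ((1/M' : ℝ) : ℂ)) '' Set.Icc 2 (2+δ)).Infinite :=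
        (Set.infinite_image_iff hinj).mpr (Set.Icc_infinite (by linarith))
      refine hinf.mono ?_
      rintro _ ⟨M', hM', rfl⟩
      have h2 := hval M' hM'
      have h3 := congrFun (congrFun h2 i) j
      simp only [Matrix.sum_apply, Matrix.smul_apply, smul_eq_mul] at h3
      simp only [Set.mem_setOf_eq, Polynomial.IsRoot, Polynomial.eval_sub,
        Polynomial.eval_finset_sum, Polynomial.eval_mul, Polynomial.eval_C, sub_eq_zero]
      rw [← h3]
    have hfinal : L (tensPow ket1 n) = piM M := by
      rw [hket, hL 1]
      ext i j
      have h0 := congrArg (Polynomial.eval (1:ℂ)) (hQ i j)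
      simp only [Polynomial.eval_sub, Polynomial.eval_finset_sum, Polynomial.eval_mul,
        Polynomial.eval_C, Polynomial.eval_zero, sub_eq_zero] at h0
      simp only [Matrix.sum_apply, Matrix.smul_apply, smul_eq_mul]
      rw [← h0]
    rw [hfinal, traceDist_piM_ket1 hM] at hLd
    exact hLd
  · intro hεM
    refine ⟨(Matrix.traceLinearMap (Fin n → Fin 2) ℂ ℂ).smulRight (piM M), ?_, ?_⟩
    · have h1 : (tensPow ket1 n).trace = 1 := by
        rw [trace_tensPow]
        have : ket1.trace = 1 := by
          simp [ket1, Matrix.trace_diagonal, Fin.sum_univ_two]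
        rw [this, one_pow]
      have h2 : (Matrix.traceLinearMap (Fin n → Fin 2) ℂ ℂ).smulRight (piM M)
          (tensPow ket1 n) = piM M := by
        rw [LinearMap.smulRight_apply]
        show (tensPow ket1 n).trace • piM M = piM M
        rw [h1, one_smul]
      rw [h2, traceDist_piM_ket1 hM]
      exact hεM
    · intro M' hM'
      have hM'0 : (0:ℝ) < M' := by linarith [hM'.1]
      have h1 : (tensPow (piM M') n).trace = 1 := by
        rw [trace_tensPow]
        have : (piM M').trace = 1 := by
          simp only [piM, Matrix.trace_diagonal, Fin.sum_univ_two]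
          simp only [Matrix.cons_val_zero, Matrix.cons_val_one, Matrix.head_cons]
          push_cast
          ring
        rw [this, one_pow]
      rw [LinearMap.smulRight_apply]
      show (tensPow (piM M') n).trace • piM M = piM M
      rw [h1, one_smul]
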